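/- arXiv:2002.02431 — 3 statements merged into one kernel-verified Lean document; each statement's English description precedes it below -/
import Mathlib

section
/- Let U be an r-dimensional subspace of ℝ^m and let k = m − ψ̄(U) denote its nonsparsity-number (the minimum number of nonzero coordinates of a nonzero vector in U). Then the coherence μ(U) = (m/r)·max_{1≤j≤m} ‖P_U e_j‖² satisfies μ(U) ≥ (m/r)·(1/k). -/
/-- If `k` is the nonsparsity-number of an `r`-dimensional subspace `U ⊆ ℝ^m`
(the minimum number of nonzero coordinates of a nonzero vector of `U`), then the
coherence `μ(U) = (m/r)·max_j ‖P_U e_j‖²` satisfies `μ(U) ≥ (m/r)·(1/k)`. -/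
theorem stmt3 (m r k : ℕ) (hm : 0 < m) (hr : 0 < r)
    (U : Submodule ℝ (EuclideanSpace ℝ (Fin m)))
    (hdim : Module.finrank ℝ U = r)
    (hmin : ∃ v ∈ U, v ≠ 0 ∧ (Finset.univ.filter (fun j => v j ≠ 0)).card = k)
    (hlb : ∀ v ∈ U, v ≠ 0 → k ≤ (Finset.univ.filter (fun j => v j ≠ 0)).card) :
    (m : ℝ) / r * (1 / k) ≤
      (m : ℝ) / r *
        ⨆ j : Fin m,
          ‖(U.orthogonalProjectionOnto (EuclideanSpace.single j 1) :
            EuclideanSpace ℝ (Fin m))‖ ^ 2 := by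
  obtain ⟨v, hvU, hv0, hcard⟩ := hmin
  set S : Finset (Fin m) := Finset.univ.filter (fun j => v j ≠ 0) with hS
  have hSne : S.Nonempty := by
    by_contra h
    apply hv0
    have hSe := Finset.not_nonempty_iff_eq_empty.mp h
    ext j
    show v j = (0 : ℝ)
    by_contra hj
    have hjS : j ∈ S := by simp [hS, hj]
    rw [hSe] at hjS
    exact absurd hjS (Finset.notMem_empty j)
  have hk0 : 0 < k := by
    rw [← hcard]
    exact Finset.card_pos.mpr hSne
  obtain ⟨j, hjS, hjmax⟩ := S.exists_max_image (fun j => (v j) ^ 2) hSne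
  have hnorm : ‖v‖ ^ 2 = ∑ i ∈ S, (v i) ^ 2 := by
    rw [EuclideanSpace.norm_eq]
    rw [Real.sq_sqrt (by positivity)]
    rw [← Finset.sum_filter_of_ne (p := fun j => v j ≠ 0)]
    · simp [sq_abs, hS]
    · intro i _ h
      intro h0
      simp [h0] at h
  have hsum : ∑ i ∈ S, (v i) ^ 2 ≤ (k : ℝ) * (v j) ^ 2 := by
    calc ∑ i ∈ S, (v i) ^ 2 ≤ ∑ _i ∈ S, (v j) ^ 2 :=
          Finset.sum_le_sum fun i hi => hjmax i hi
      _ = (k : ℝ) * (v j) ^ 2 := by rw [Finset.sum_const, hcard]; ring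
  -- Cauchy–Schwarz step
  have hproj : (U.orthogonalProjectionOnto v : EuclideanSpace ℝ (Fin m)) = v :=
    Submodule.starProjection_eq_self_iff.mpr hvU
  have hinner : (inner ℝ (EuclideanSpace.single j (1:ℝ)) v : ℝ) = v j := by
    simp [EuclideanSpace.inner_single_left]
  have hinner2 : (inner ℝ ((U.orthogonalProjectionOnto (EuclideanSpace.single j 1) :
      EuclideanSpace ℝ (Fin m))) v : ℝ) = v j := by
    rw [U.coe_orthogonalProjectionOnto_apply, Submodule.inner_starProjection_left_eq_right,
      ← U.coe_orthogonalProjectionOnto_apply, hproj, hinner]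
  have hcs : (v j) ^ 2 ≤ ‖(U.orthogonalProjectionOnto (EuclideanSpace.single j 1) :
      EuclideanSpace ℝ (Fin m))‖ ^ 2 * ‖v‖ ^ 2 := by
    rw [← hinner2]
    have := abs_real_inner_le_norm ((U.orthogonalProjectionOnto (EuclideanSpace.single j 1) :
      EuclideanSpace ℝ (Fin m))) v
    calc (inner ℝ ((U.orthogonalProjectionOnto (EuclideanSpace.single j 1) :
          EuclideanSpace ℝ (Fin m))) v : ℝ) ^ 2
        = |(inner ℝ ((U.orthogonalProjectionOnto (EuclideanSpace.single j 1) :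
          EuclideanSpace ℝ (Fin m))) v : ℝ)| ^ 2 := (sq_abs _).symm
      _ ≤ (‖(U.orthogonalProjectionOnto (EuclideanSpace.single j 1) :
          EuclideanSpace ℝ (Fin m))‖ * ‖v‖) ^ 2 := by
          apply pow_le_pow_left₀ (abs_nonneg _) this
      _ = _ := by ring
  have hvnorm : (0:ℝ) < ‖v‖ ^ 2 := pow_pos (norm_pos_iff.mpr hv0) 2
  have key : (1 : ℝ) / k ≤ ‖(U.orthogonalProjectionOnto (EuclideanSpace.single j 1) :
      EuclideanSpace ℝ (Fin m))‖ ^ 2 := by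
    have hk : (0:ℝ) < k := Nat.cast_pos.mpr hk0
    rw [div_le_iff₀ hk] at *
    nlinarith [hnorm, hsum, hcs]
  have hbdd : BddAbove (Set.range fun j : Fin m =>
      ‖(U.orthogonalProjectionOnto (EuclideanSpace.single j 1) :
        EuclideanSpace ℝ (Fin m))‖ ^ 2) := Set.Finite.bddAbove (Set.finite_range _)
  have hle : (1 : ℝ) / k ≤ ⨆ j : Fin m,
      ‖(U.orthogonalProjectionOnto (EuclideanSpace.single j 1) :
        EuclideanSpace ℝ (Fin m))‖ ^ 2 :=
    key.trans (le_ciSup hbdd j)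
  exact mul_le_mul_of_nonneg_left hle (by positivity)
end

section
/- Let M be an m × n real matrix of rank r whose row space V has nonsparsity-number t = ψ(V). Let C ⊆ [n] be a set of columns such that rank(M restricted to columns C) < r. Then the number of columns of M not lying in the span of the columns indexed by C is at least t. -/
open scoped Classical

/-- The nonsparsity-number of a subspace `V ⊆ ℝ^ι`: the minimum number of nonzero
coordinates of a nonzero vector of `V`. -/
noncomputable def nonsparsity {ι : Type*} [Fintype ι] (V : Submodule ℝ (ι → ℝ)) : ℕ :=
  sInf {t | ∃ x ∈ V, x ≠ 0 ∧ (Finset.univ.filter (fun j => x j ≠ 0)).card = t}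

/-- If the columns of `M` indexed by `C` do not span a space of full rank `M.rank`, then
the number of columns of `M` not lying in the span of the columns indexed by `C` is at
least the nonsparsity-number of the row space of `M`. -/
theorem stmt13 (m n : ℕ) (M : Matrix (Fin m) (Fin n) ℝ) (C : Finset (Fin n))
    (hC : (M.submatrix id (fun j : {j : Fin n // j ∈ C} => (j : Fin n))).rank < M.rank) :
    nonsparsity (Submodule.span ℝ (Set.range M)) ≤
      (Finset.univ.filter
        (fun j => M.transpose j ∉ Submodule.span ℝ (M.transpose '' ↑C))).card := by
  set W : Submodule ℝ (Fin m → ℝ) := Submodule.span ℝ (M.transpose '' ↑C) with hW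
  set U : Submodule ℝ (Fin m → ℝ) := Submodule.span ℝ (Set.range M.transpose) with hU
  -- the column span of the submatrix is W
  have hrange : Set.range (M.submatrix id (fun j : {j : Fin n // j ∈ C} => (j : Fin n))).transpose
      = M.transpose '' ↑C := by
    ext v
    constructor
    · rintro ⟨⟨j, hj⟩, rfl⟩
      exact ⟨j, hj, rfl⟩
    · rintro ⟨j, hj, rfl⟩
      exact ⟨⟨j, hj⟩, rfl⟩
  have hWU : W ≤ U := Submodule.span_mono (by rintro v ⟨j, _, rfl⟩; exact ⟨j, rfl⟩)
  have hlt : W < U := by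
    refine lt_of_le_of_ne hWU ?_
    intro h
    rw [Matrix.rank_eq_finrank_span_cols, Matrix.rank_eq_finrank_span_cols] at hC
    change Module.finrank ℝ (Submodule.span ℝ (Set.range (M.submatrix id
      (fun j : {j : Fin n // j ∈ C} => (j : Fin n))).transpose)) <
      Module.finrank ℝ (Submodule.span ℝ (Set.range M.transpose)) at hC
    rw [hrange, ← hW, ← hU,
      h] at hC
    exact lt_irrefl _ hC
  obtain ⟨u, huU, huW⟩ := SetLike.exists_of_lt hlt
  obtain ⟨f, hfu, hfW⟩ := W.exists_dual_map_eq_bot_of_notMem huW inferInstance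
  have hfW' : ∀ w ∈ W, f w = 0 := by
    intro w hw
    have : f w ∈ W.map f := ⟨w, hw, rfl⟩
    rwa [hfW, Submodule.mem_bot] at this
  set x : Fin n → ℝ := fun j => f (M.transpose j) with hx
  have hxmem : x ∈ Submodule.span ℝ (Set.range M) := by
    have hxeq : x = ∑ i : Fin m, f (Pi.single i 1 : Fin m → ℝ) • M i := by
      funext j
      have : M.transpose j = ∑ i, M i j • (Pi.single i 1 : Fin m → ℝ) := by
        funext k
        simp [Matrix.transpose_apply, Pi.single_apply, Finset.sum_apply,
          mul_ite, mul_one, mul_zero]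
      simp only [hx, this, map_sum, map_smul]
      simp [Finset.sum_apply, smul_eq_mul, mul_comm]
    rw [hxeq]
    exact Submodule.sum_mem _ fun i _ =>
      Submodule.smul_mem _ _ (Submodule.subset_span ⟨i, rfl⟩)
  have hxne : x ≠ 0 := by
    intro h
    apply hfu
    have hker : U ≤ LinearMap.ker f := by
      rw [hU, Submodule.span_le]
      rintro v ⟨j, rfl⟩
      have := congrFun h j
      simpa [hx] using this
    exact hker huU
  have hsubset : (Finset.univ.filter (fun j => x j ≠ 0)) ⊆
      (Finset.univ.filter (fun j => M.transpose j ∉ Submodule.span ℝ (M.transpose '' ↑C))) := by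
    intro j hj
    simp only [Finset.mem_filter, Finset.mem_univ, true_and] at hj ⊢
    intro hmem
    exact hj (hfW' _ hmem)
  calc nonsparsity (Submodule.span ℝ (Set.range M))
      ≤ (Finset.univ.filter (fun j => x j ≠ 0)).card :=
        Nat.sInf_le ⟨x, hxmem, hxne, rfl⟩
    _ ≤ _ := Finset.card_le_card hsubset
end

section
/- Let Ũ and U be two k-dimensional subspaces of ℝ^m and let θ(Ũ, U) denote the largest principal angle between them. Then μ(Ũ) ≤ 2·μ(U) + 2·(m/k)·θ(Ũ, U)², where μ denotes coherence. -/
/-- For two `k`-dimensional subspaces `Ũ, U ⊆ ℝ^m` with largest principal angle `θ`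
(characterized by `‖P_Ũ - P_U‖ = sin θ`), the coherences satisfy
`μ(Ũ) ≤ 2·μ(U) + 2·(m/k)·θ²`. -/
theorem stmt17 (m k : ℕ) (hm : 0 < m) (hk : 0 < k)
    (Ut U : Submodule ℝ (EuclideanSpace ℝ (Fin m)))
    (hUt : Module.finrank ℝ Ut = k) (hU : Module.finrank ℝ U = k)
    (θ : ℝ) (hθ0 : 0 ≤ θ)
    (hθ : ‖Ut.subtypeL.comp (Submodule.orthogonalProjectionOnto Ut) -
            U.subtypeL.comp (Submodule.orthogonalProjectionOnto U)‖ = Real.sin θ) :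
    (m : ℝ) / k *
        ⨆ j : Fin m,
          ‖(Submodule.orthogonalProjectionOnto Ut (EuclideanSpace.single j 1) :
            EuclideanSpace ℝ (Fin m))‖ ^ 2 ≤
      2 * ((m : ℝ) / k *
        ⨆ j : Fin m,
          ‖(Submodule.orthogonalProjectionOnto U (EuclideanSpace.single j 1) :
            EuclideanSpace ℝ (Fin m))‖ ^ 2) +
      2 * ((m : ℝ) / k) * θ ^ 2 := by
  have hmn : Nonempty (Fin m) := ⟨⟨0, hm⟩⟩
  set f := fun j : Fin m =>
    ‖(Submodule.orthogonalProjectionOnto Ut (EuclideanSpace.single j 1) :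
      EuclideanSpace ℝ (Fin m))‖ ^ 2 with hf
  set g := fun j : Fin m =>
    ‖(Submodule.orthogonalProjectionOnto U (EuclideanSpace.single j 1) :
      EuclideanSpace ℝ (Fin m))‖ ^ 2 with hg
  have hgbdd : BddAbove (Set.range g) := Set.Finite.bddAbove (Set.finite_range g)
  have hnorm : ∀ j : Fin m, ‖(EuclideanSpace.single j (1:ℝ))‖ = 1 := by
    intro j
    simp [EuclideanSpace.norm_single]
  have key : ∀ j : Fin m, f j ≤ 2 * (⨆ j, g j) + 2 * θ ^ 2 := by
    intro j
    have hdiff : ‖(Submodule.orthogonalProjectionOnto Ut (EuclideanSpace.single j 1) :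
        EuclideanSpace ℝ (Fin m)) -
        (Submodule.orthogonalProjectionOnto U (EuclideanSpace.single j 1) :
        EuclideanSpace ℝ (Fin m))‖ ≤ θ := by
      have h1 := (Ut.subtypeL.comp (Submodule.orthogonalProjectionOnto Ut) -
          U.subtypeL.comp (Submodule.orthogonalProjectionOnto U)).le_opNorm
          (EuclideanSpace.single j 1)
      rw [hθ, hnorm j, mul_one] at h1
      have h2 : Real.sin θ ≤ θ := Real.sin_le hθ0
      calc _ ≤ Real.sin θ := h1
        _ ≤ θ := h2
    have htri : ‖(Submodule.orthogonalProjectionOnto Ut (EuclideanSpace.single j 1) :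
        EuclideanSpace ℝ (Fin m))‖ ≤
        ‖(Submodule.orthogonalProjectionOnto U (EuclideanSpace.single j 1) :
        EuclideanSpace ℝ (Fin m))‖ + θ := by
      calc ‖(Submodule.orthogonalProjectionOnto Ut (EuclideanSpace.single j 1) :
          EuclideanSpace ℝ (Fin m))‖
          ≤ ‖(Submodule.orthogonalProjectionOnto U (EuclideanSpace.single j 1) :
              EuclideanSpace ℝ (Fin m))‖ +
            ‖(Submodule.orthogonalProjectionOnto Ut (EuclideanSpace.single j 1) :
              EuclideanSpace ℝ (Fin m)) -
            (Submodule.orthogonalProjectionOnto U (EuclideanSpace.single j 1) :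
              EuclideanSpace ℝ (Fin m))‖ := by
              have := norm_sub_norm_le
                (Submodule.orthogonalProjectionOnto Ut (EuclideanSpace.single j 1) :
                  EuclideanSpace ℝ (Fin m))
                (Submodule.orthogonalProjectionOnto U (EuclideanSpace.single j 1) :
                  EuclideanSpace ℝ (Fin m))
              linarith
        _ ≤ _ := by linarith
    have hsq : f j ≤ 2 * g j + 2 * θ ^ 2 := by
      simp only [hf, hg]
      have h0 : (0:ℝ) ≤ ‖(Submodule.orthogonalProjectionOnto Ut (EuclideanSpace.single j 1) :
          EuclideanSpace ℝ (Fin m))‖ := norm_nonneg _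
      have := sq_nonneg (‖(Submodule.orthogonalProjectionOnto U (EuclideanSpace.single j 1) :
          EuclideanSpace ℝ (Fin m))‖ - θ)
      nlinarith [sq_nonneg (‖(Submodule.orthogonalProjectionOnto U (EuclideanSpace.single j 1) :
          EuclideanSpace ℝ (Fin m))‖ + θ)]
    have hle : g j ≤ ⨆ j, g j := le_ciSup hgbdd j
    linarith
  have hsup : (⨆ j, f j) ≤ 2 * (⨆ j, g j) + 2 * θ ^ 2 := ciSup_le key
  have hmk : (0:ℝ) ≤ (m : ℝ) / k := by positivity
  have := mul_le_mul_of_nonneg_left hsup hmk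
  calc (m : ℝ) / k * ⨆ j, f j ≤ (m : ℝ) / k * (2 * (⨆ j, g j) + 2 * θ ^ 2) := this
    _ = 2 * ((m : ℝ) / k * ⨆ j, g j) + 2 * ((m : ℝ) / k) * θ ^ 2 := by ring
end
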